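/- Every non-consecutive Latin square of order 5 is obtained by taking a non-consecutive permutation of {1,...,5} whose first and last entries do not differ by 1, and taking each subsequent row to be a cyclic shift of the previous row by 1, all shifts to the left or all to the right. -/
import Mathlib


/-- An `n × n` Latin square with entries in `{1, …, n}`. -/
def latin (n : ℕ) (M : Fin n → Fin n → ℕ) : Prop :=
  (∀ i j, M i j ∈ Finset.Icc 1 n) ∧
  (∀ i, Function.Injective fun j => M i j) ∧
  (∀ j, Function.Injective fun i => M i j)

/-- Two cells are orthogonally adjacent. -/
def orthAdj (n : ℕ) (p q : Fin n × Fin n) : Prop :=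
  (p.1 = q.1 ∧ (p.2.val + 1 = q.2.val ∨ q.2.val + 1 = p.2.val)) ∨
  (p.2 = q.2 ∧ (p.1.val + 1 = q.1.val ∨ q.1.val + 1 = p.1.val))

/-- Two cells are a king's move apart (orthogonally or diagonally adjacent). -/
def kingAdj (n : ℕ) (p q : Fin n × Fin n) : Prop :=
  p ≠ q ∧ ((p.1.val : ℤ) - q.1.val).natAbs ≤ 1 ∧ ((p.2.val : ℤ) - q.2.val).natAbs ≤ 1

/-- Two cells are a knight's move apart. -/
def knightAdj (n : ℕ) (p q : Fin n × Fin n) : Prop :=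
  (((p.1.val : ℤ) - q.1.val).natAbs = 1 ∧ ((p.2.val : ℤ) - q.2.val).natAbs = 2) ∨
  (((p.1.val : ℤ) - q.1.val).natAbs = 2 ∧ ((p.2.val : ℤ) - q.2.val).natAbs = 1)

/-- Two cells are a bishop's move apart: on a common diagonal, at nonzero distance. -/
def bishopMove (n : ℕ) (p q : Fin n × Fin n) : Prop :=
  ((p.1.val : ℤ) - q.1.val).natAbs = ((p.2.val : ℤ) - q.2.val).natAbs ∧ p.1 ≠ q.1

/-- Two cells are orthogonally adjacent on the torus (wrapping around). -/
def torAdj (n : ℕ) (p q : Fin n × Fin n) : Prop :=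
  p ≠ q ∧
    ((p.1 = q.1 ∧ ((p.2.val + 1) % n = q.2.val ∨ (q.2.val + 1) % n = p.2.val)) ∨
     (p.2 = q.2 ∧ ((p.1.val + 1) % n = q.1.val ∨ (q.1.val + 1) % n = p.1.val)))

/-- Two values differ by exactly 1. -/
def diffOne (a b : ℕ) : Prop := ((a : ℤ) - (b : ℤ)).natAbs = 1

/-! ### Auxiliary machinery -/

/-- Left cyclic shift of a row. -/
def sL (g : Fin 5 → Fin 5) : Fin 5 → Fin 5 := fun j => g (j + 1)

/-- Right cyclic shift of a row. -/
def sR (g : Fin 5 → Fin 5) : Fin 5 → Fin 5 := fun j => g (j - 1)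

/-- A row is horizontally non-consecutive. -/
def NCrow (g : Fin 5 → Fin 5) : Prop :=
  ∀ j j' : Fin 5, j.val + 1 = j'.val →
    (g j).val + 1 ≠ (g j').val ∧ (g j').val + 1 ≠ (g j).val

/-- Two rows are compatible as vertically adjacent rows. -/
def compatF (g h : Fin 5 → Fin 5) : Prop :=
  ∀ j : Fin 5, g j ≠ h j ∧ (g j).val + 1 ≠ (h j).val ∧ (h j).val + 1 ≠ (g j).val

/-- The 14 non-consecutive permutations of `Fin 5`. -/
instance (g : Fin 5 → Fin 5) : Decidable (NCrow g) := by unfold NCrow; infer_instance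
instance (g h : Fin 5 → Fin 5) : Decidable (compatF g h) := by unfold compatF; infer_instance

def rowsF : Fin 14 → Fin 5 → Fin 5 :=
  ![![0,2,4,1,3], ![0,3,1,4,2], ![1,3,0,2,4], ![1,3,0,4,2], ![1,4,2,0,3],
    ![2,0,3,1,4], ![2,0,4,1,3], ![2,4,0,3,1], ![2,4,1,3,0], ![3,0,2,4,1],
    ![3,1,4,0,2], ![3,1,4,2,0], ![4,1,3,0,2], ![4,2,0,3,1]]

set_option synthInstance.maxHeartbeats 1000000 in
set_option synthInstance.maxSize 5000 in
set_option maxRecDepth 100000 in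
set_option maxHeartbeats 4000000 in
lemma rowClass' : ∀ a b c d e : Fin 5,
    a ≠ b → a ≠ c → a ≠ d → a ≠ e → b ≠ c → b ≠ d → b ≠ e → c ≠ d → c ≠ e → d ≠ e →
    a.val + 1 ≠ b.val → b.val + 1 ≠ a.val →
    b.val + 1 ≠ c.val → c.val + 1 ≠ b.val →
    c.val + 1 ≠ d.val → d.val + 1 ≠ c.val →
    d.val + 1 ≠ e.val → e.val + 1 ≠ d.val →
    ∃ k : Fin 14, ![a,b,c,d,e] = rowsF k := by decide

lemma eta5 (g : Fin 5 → Fin 5) : g = ![g 0, g 1, g 2, g 3, g 4] := by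
  funext j; fin_cases j <;> rfl

set_option synthInstance.maxHeartbeats 1000000 in
set_option synthInstance.maxSize 5000 in
set_option maxRecDepth 100000 in
set_option maxHeartbeats 4000000 in
lemma tripleLem : ∀ a b c : Fin 14,
    compatF (rowsF a) (rowsF b) → compatF (rowsF b) (rowsF c) →
    (∀ j, rowsF a j ≠ rowsF c j) →
    (rowsF b = sL (rowsF a) ∧ rowsF c = sL (rowsF b)) ∨
    (rowsF b = sR (rowsF a) ∧ rowsF c = sR (rowsF b)) := by decide

lemma noLR : ∀ k : Fin 14, sL (rowsF k) ≠ sR (rowsF k) := by decide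

/-- Every non-consecutive Latin square of order 5 comes from cycling a cyclable
non-consecutive permutation: the first and last entries of the first row do not
differ by 1, and each subsequent row is the cyclic shift of the previous one by 1,
all shifts to the left or all to the right. -/
theorem stmt3 (M : Fin 5 → Fin 5 → ℕ) (hL : latin 5 M)
    (hNC : ∀ p q : Fin 5 × Fin 5, orthAdj 5 p q → ¬ diffOne (M p.1 p.2) (M q.1 q.2)) :
    ¬ diffOne (M 0 0) (M 0 4) ∧
    ((∀ i i' j j' : Fin 5, i'.val = i.val + 1 → j'.val = (j.val + 1) % 5 →
        M i' j = M i j') ∨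
     (∀ i i' j j' : Fin 5, i'.val = i.val + 1 → j'.val = (j.val + 1) % 5 →
        M i' j' = M i j)) := by
  obtain ⟨hIcc, hrow, hcol⟩ := hL
  have hb : ∀ i j, 1 ≤ M i j ∧ M i j ≤ 5 := by
    intro i j; have := hIcc i j; simpa [Finset.mem_Icc] using this
  have hex : ∀ i j, ∃ v : Fin 5, M i j = v.val + 1 := by
    intro i j; have := hb i j; exact ⟨⟨M i j - 1, by omega⟩, by show M i j = M i j - 1 + 1; omega⟩
  choose f hM using hex
  have hfinj : ∀ i, Function.Injective (f i) := by
    intro i j j' h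
    apply hrow i
    show M i j = M i j'
    rw [hM i j, hM i j', h]
  have hfNC : ∀ i, NCrow (f i) := by
    intro i j j' hjj
    have h2 : ¬ diffOne (M i j) (M i j') := hNC (i, j) (i, j') (Or.inl ⟨rfl, Or.inl hjj⟩)
    unfold diffOne at h2
    have e1 := hM i j; have e2 := hM i j'
    constructor <;> intro h3 <;> exact h2 (by omega)
  have hcd : ∀ i i' : Fin 5, i ≠ i' → ∀ j, f i j ≠ f i' j := by
    intro i i' hne j h
    exact hne (hcol j (show M i j = M i' j by rw [hM i j, hM i' j, h]))
  have hcompat : ∀ i i' : Fin 5, i'.val = i.val + 1 → compatF (f i) (f i') := by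
    intro i i' hii j
    have h2 : ¬ diffOne (M i j) (M i' j) := hNC (i, j) (i', j) (Or.inr ⟨rfl, Or.inl hii.symm⟩)
    unfold diffOne at h2
    have e1 := hM i j; have e2 := hM i' j
    refine ⟨hcd i i' (fun h => by rw [h] at hii; omega) j, ?_, ?_⟩ <;>
      intro h3 <;> exact h2 (by omega)
  have hrowc : ∀ i : Fin 5, ∃ k, f i = rowsF k := by
    intro i
    have inj : ∀ (a b : Fin 5), a ≠ b → f i a ≠ f i b := fun a b hab h => hab (hfinj i h)
    have nc := hfNC i
    obtain ⟨k, hk⟩ := rowClass' (f i 0) (f i 1) (f i 2) (f i 3) (f i 4)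
      (inj 0 1 (by decide)) (inj 0 2 (by decide)) (inj 0 3 (by decide)) (inj 0 4 (by decide))
      (inj 1 2 (by decide)) (inj 1 3 (by decide)) (inj 1 4 (by decide))
      (inj 2 3 (by decide)) (inj 2 4 (by decide)) (inj 3 4 (by decide))
      (nc 0 1 rfl).1 (nc 0 1 rfl).2 (nc 1 2 rfl).1 (nc 1 2 rfl).2
      (nc 2 3 rfl).1 (nc 2 3 rfl).2 (nc 3 4 rfl).1 (nc 3 4 rfl).2
    exact ⟨k, (eta5 (f i)).trans hk⟩
  obtain ⟨k0, e0⟩ := hrowc 0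
  obtain ⟨k1, e1⟩ := hrowc 1
  obtain ⟨k2, e2⟩ := hrowc 2
  obtain ⟨k3, e3⟩ := hrowc 3
  obtain ⟨k4, e4⟩ := hrowc 4
  have c01 : compatF (rowsF k0) (rowsF k1) := by rw [← e0, ← e1]; exact hcompat 0 1 rfl
  have c12 : compatF (rowsF k1) (rowsF k2) := by rw [← e1, ← e2]; exact hcompat 1 2 rfl
  have c23 : compatF (rowsF k2) (rowsF k3) := by rw [← e2, ← e3]; exact hcompat 2 3 rfl
  have c34 : compatF (rowsF k3) (rowsF k4) := by rw [← e3, ← e4]; exact hcompat 3 4 rfl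
  have d02 : ∀ j, rowsF k0 j ≠ rowsF k2 j := by
    rw [← e0, ← e2]; exact hcd 0 2 (by decide)
  have d13 : ∀ j, rowsF k1 j ≠ rowsF k3 j := by
    rw [← e1, ← e3]; exact hcd 1 3 (by decide)
  have d24 : ∀ j, rowsF k2 j ≠ rowsF k4 j := by
    rw [← e2, ← e4]; exact hcd 2 4 (by decide)
  have t1 := tripleLem k0 k1 k2 c01 c12 d02
  have t2 := tripleLem k1 k2 k3 c12 c23 d13
  have t3 := tripleLem k2 k3 k4 c23 c34 d24
  -- resolve direction consistency
  rcases t1 with ⟨s01, s12⟩ | ⟨s01, s12⟩ <;>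
  rcases t2 with ⟨s12', s23⟩ | ⟨s12', s23⟩ <;>
  rcases t3 with ⟨s23', s34⟩ | ⟨s23', s34⟩
  -- LLL
  · have S : ∀ i i' : Fin 5, i'.val = i.val + 1 → f i' = sL (f i) := by
      intro i i' h
      have hb' := i'.isLt
      have hc : i.val = 0 ∨ i.val = 1 ∨ i.val = 2 ∨ i.val = 3 := by omega
      rcases hc with h0 | h0 | h0 | h0
      · have hi : i = 0 := Fin.ext h0
        have hi' : i' = 1 := Fin.ext (by omega)
        subst hi; subst hi'; rw [e1, e0, s01]
      · have hi : i = 1 := Fin.ext h0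
        have hi' : i' = 2 := Fin.ext (by omega)
        subst hi; subst hi'; rw [e2, e1, s12]
      · have hi : i = 2 := Fin.ext h0
        have hi' : i' = 3 := Fin.ext (by omega)
        subst hi; subst hi'; rw [e3, e2, s23]
      · have hi : i = 3 := Fin.ext h0
        have hi' : i' = 4 := Fin.ext (by omega)
        subst hi; subst hi'; rw [e4, e3, s34]
    constructor
    · have hS := S 0 1 rfl
      have key : M 1 4 = M 0 0 := by
        rw [hM 1 4, hM 0 0, hS]
        show (f 0 (4 + 1)).val + 1 = (f 0 0).val + 1
        rw [show (4 + 1 : Fin 5) = 0 from rfl]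
      have h2 : ¬ diffOne (M 0 4) (M 1 4) :=
        hNC ((0 : Fin 5), (4 : Fin 5)) ((1 : Fin 5), (4 : Fin 5)) (Or.inr ⟨rfl, Or.inl rfl⟩)
      unfold diffOne at h2 ⊢
      intro h3; exact h2 (by omega)
    · left
      intro i i' j j' hi hj
      have hS := S i i' hi
      have hj' : j' = j + 1 := Fin.ext (by rw [hj]; simp [Fin.val_add])
      rw [hM i' j, hM i j', hS, hj']
      rfl
  · exact absurd (s23.symm.trans s23') (noLR k2)
  · exact absurd (s12.symm.trans s12') (noLR k1)
  · exact absurd (s12.symm.trans s12') (noLR k1)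
  · exact absurd (s12'.symm.trans s12) (noLR k1)
  · exact absurd (s12'.symm.trans s12) (noLR k1)
  · exact absurd (s23'.symm.trans s23) (noLR k2)
  -- RRR
  · have S : ∀ i i' : Fin 5, i'.val = i.val + 1 → f i' = sR (f i) := by
      intro i i' h
      have hb' := i'.isLt
      have hc : i.val = 0 ∨ i.val = 1 ∨ i.val = 2 ∨ i.val = 3 := by omega
      rcases hc with h0 | h0 | h0 | h0
      · have hi : i = 0 := Fin.ext h0
        have hi' : i' = 1 := Fin.ext (by omega)
        subst hi; subst hi'; rw [e1, e0, s01]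
      · have hi : i = 1 := Fin.ext h0
        have hi' : i' = 2 := Fin.ext (by omega)
        subst hi; subst hi'; rw [e2, e1, s12]
      · have hi : i = 2 := Fin.ext h0
        have hi' : i' = 3 := Fin.ext (by omega)
        subst hi; subst hi'; rw [e3, e2, s23]
      · have hi : i = 3 := Fin.ext h0
        have hi' : i' = 4 := Fin.ext (by omega)
        subst hi; subst hi'; rw [e4, e3, s34]
    constructor
    · have hS := S 0 1 rfl
      have key : M 1 0 = M 0 4 := by
        rw [hM 1 0, hM 0 4, hS]
        show (f 0 (0 - 1)).val + 1 = (f 0 4).val + 1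
        rw [show (0 - 1 : Fin 5) = 4 from rfl]
      have h2 : ¬ diffOne (M 0 0) (M 1 0) :=
        hNC ((0 : Fin 5), (0 : Fin 5)) ((1 : Fin 5), (0 : Fin 5)) (Or.inr ⟨rfl, Or.inl rfl⟩)
      unfold diffOne at h2 ⊢
      intro h3; exact h2 (by omega)
    · right
      intro i i' j j' hi hj
      have hS := S i i' hi
      have hj' : j' = j + 1 := Fin.ext (by rw [hj]; simp [Fin.val_add])
      rw [hM i' j', hM i j, hS, hj']
      show (f i (j + 1 - 1)).val + 1 = _
      rw [add_sub_cancel_right]
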